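/- Suppose each P*_s (for s ∈ S) satisfies P*_s(X_0 = s) = 1, P*_s(T < ∞) = 1, E*_s(T) < ∞, and regenerates at T with restart laws (P*_s : s ∈ S). Let π = (π_s : s ∈ S) be strictly positive with ∑_{s∈S} π_s · E*_s(T) = 1, and define the probability measure ℙ* on I^ℕ by ℙ*(B) = ∑_{s∈S} π_s ∑_{n≥0} P*_s({T > n} ∩ Θ_n^{-1}B). Then ℙ* is stationary (i.e., invariant under the shift Θ_1) if and only if π is invariant for the stochastic matrix Q = (q_{s s'}) with q_{s s'} = P*_s(X_T = s'), that is, π_s = ∑_{s'∈S} π_{s'} q_{s' s} for every s ∈ S. -/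

import Mathlib

open MeasureTheory Filter
open scoped ENNReal NNReal ENat

variable {I : Type*} [MeasurableSpace I]

/-- The shift map `Θ_q` on sequences: `(Θ_q x) n = x (n + q)`. -/
def shiftI (q : ℕ) (x : ℕ → I) : ℕ → I := fun n => x (n + q)

/-- The hitting time of a different class:
`T(x) = inf {n > 0 : x n ∈ S \ C(x 0)}` (with `inf ∅ = ∞`), where the class `C(x 0)` is
taken with respect to the equivalence relation `sim`. -/
noncomputable def hitT (S : Finset I) (sim : I → I → Prop) (x : ℕ → I) : ℕ∞ :=
  sInf ((fun n : ℕ => (n : ℕ∞)) '' {n : ℕ | 0 < n ∧ x n ∈ S ∧ ¬ sim (x 0) (x n)})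

/-- The iterated hitting times of different classes: `T^0 = 0`, `T^1 = T` and
`T^{n+1} = T^n + T ∘ Θ_{T^n}` (with value `∞` as soon as one of the terms is infinite). -/
noncomputable def hitTn (S : Finset I) (sim : I → I → Prop) : ℕ → (ℕ → I) → ℕ∞
  | 0, _ => 0
  | n + 1, x =>
    let t := hitTn S sim n x
    if t = ⊤ then (⊤ : ℕ∞) else t + hitT S sim (shiftI t.toNat x)

/-- The σ-field `B_n = σ(X_0, …, X_n)` generated by the first `n + 1` coordinates. -/
def coordSA (I : Type*) [MeasurableSpace I] (n : ℕ) : MeasurableSpace (ℕ → I) :=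
  ⨆ k ≤ n, MeasurableSpace.comap (fun x : ℕ → I => x k) inferInstance

/-- The collection of events in the σ-field `B_{T'}` of the stopping time `T'`:
measurable sets `B` with `B ∩ {T' ≤ n} ∈ B_n` for all `n`. -/
def stopSets (T' : (ℕ → I) → ℕ∞) : Set (Set (ℕ → I)) :=
  {B | MeasurableSet B ∧ ∀ n : ℕ, MeasurableSet[coordSA I n] (B ∩ {x | T' x ≤ (n : ℕ∞)})}

/-- `P` regenerates at the stopping time `T'` with restart laws `(Ps s : s ∈ S)`:
`X_{T'} ∈ S` a.s. on `{T' < ∞}`, and for every bounded measurable `h`,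
`E[1_{T' < ∞} · h ∘ Θ_{T'} ∣ B_{T'}] = 1_{T' < ∞} · E_{X_{T'}}(h)` `P`-a.s., expressed by the
defining integral identity over all events of `B_{T'}`. -/
def Regen (S : Finset I) (T' : (ℕ → I) → ℕ∞) (Ps : I → Measure (ℕ → I))
    (P : Measure (ℕ → I)) : Prop :=
  P ({x | T' x < ⊤} ∩ {x | x (T' x).toNat ∉ (S : Set I)}) = 0 ∧
  ∀ h : (ℕ → I) → ℝ, Measurable h → (∃ M, ∀ y, |h y| ≤ M) →
    ∀ B ∈ stopSets T',
      ∫ x in B ∩ {x | T' x < ⊤}, h (shiftI (T' x).toNat x) ∂P =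
      ∫ x in B ∩ {x | T' x < ⊤}, (∫ y, h y ∂ Ps (x (T' x).toNat)) ∂P

/-- The expectation `E(T)` of the hitting time `T` under `P`. -/
noncomputable def hitET (S : Finset I) (sim : I → I → Prop) (P : Measure (ℕ → I)) : ℝ≥0∞ :=
  ∫⁻ x, (hitT S sim x : ℝ≥0∞) ∂P

/-- The measure `ℙ(B) = ∑_{s ∈ S} π_s ∑_{n ≥ 0} P_s({T > n} ∩ Θ_n⁻¹ B)`. -/
noncomputable def lawP (S : Finset I) (sim : I → I → Prop) (π : I → ℝ≥0)
    (P : I → Measure (ℕ → I)) : Measure (ℕ → I) :=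
  ∑ s ∈ S, π s •
    Measure.sum (fun n : ℕ => ((P s).restrict {x | (n : ℕ∞) < hitT S sim x}).map (shiftI n))

/-- The transition matrix entries `q_{s s'} = P*_s(X_T = s')`. -/
noncomputable def qmat (S : Finset I) (sim : I → I → Prop) (Ps : I → Measure (ℕ → I))
    (s s' : I) : ℝ≥0∞ :=
  Ps s {x | hitT S sim x < ⊤ ∧ x (hitT S sim x).toNat = s'}

set_option linter.unusedSectionVars false
set_option linter.unusedVariables false
set_option maxHeartbeats 1000000

namespace Stmt6Aux

variable {I : Type*} [MeasurableSpace I]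

lemma shiftI_zero : shiftI (I := I) 0 = id := rfl

lemma shiftI_comp (q n : ℕ) : shiftI (I := I) q ∘ shiftI n = shiftI (n + q) := by
  funext x m
  simp only [shiftI, Function.comp]
  congr 1
  omega

lemma measurable_shiftI (q : ℕ) : Measurable (shiftI (I := I) q) := by
  refine measurable_pi_iff.mpr fun n => measurable_pi_apply (n + q)

lemma measurableSet_of_finite {J : Type*} [MeasurableSpace J] [Finite J]
    [MeasurableSingletonClass J] (s : Set J) : MeasurableSet s := s.toFinite.measurableSet

lemma coordSA_le (n : ℕ) : coordSA I n ≤ (inferInstance : MeasurableSpace (ℕ → I)) :=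
  iSup₂_le fun k _ => (measurable_pi_apply k).comap_le

lemma measurable_coord_coordSA {n k : ℕ} (hk : k ≤ n) :
    Measurable[coordSA I n] fun x : ℕ → I => x k :=
  Measurable.of_comap_le (le_iSup₂ (f := fun k (_ : k ≤ n) =>
    MeasurableSpace.comap (fun x : ℕ → I => x k) inferInstance) k hk)

variable (S : Finset I) (sim : I → I → Prop)

lemma one_le_hitT (x : ℕ → I) : 1 ≤ hitT S sim x := by
  apply le_sInf
  rintro b ⟨k, hk, rfl⟩
  show (1 : ℕ∞) ≤ (k : ℕ∞)
  exact_mod_cast hk.1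

lemma coe_lt_hitT_iff (x : ℕ → I) (n : ℕ) :
    (n : ℕ∞) < hitT S sim x ↔ ∀ k ≤ n, ¬(0 < k ∧ x k ∈ S ∧ ¬ sim (x 0) (x k)) := by
  constructor
  · intro h k hk hD
    have h1 : hitT S sim x ≤ (k : ℕ∞) := sInf_le ⟨k, hD, rfl⟩
    have h2 : (k : ℕ∞) ≤ (n : ℕ∞) := by exact_mod_cast hk
    exact absurd (h1.trans h2) (not_le.mpr h)
  · intro h
    have hle : ((n + 1 : ℕ) : ℕ∞) ≤ hitT S sim x := by
      apply le_sInf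
      rintro b ⟨k, hk, rfl⟩
      have : n + 1 ≤ k := by
        by_contra hc
        exact h k (by omega) hk
      show ((n + 1 : ℕ) : ℕ∞) ≤ (k : ℕ∞)
      exact_mod_cast this
    refine lt_of_lt_of_le ?_ hle
    exact_mod_cast Nat.lt_succ_self n

lemma hitT_le_coe_iff (x : ℕ → I) (n : ℕ) :
    hitT S sim x ≤ (n : ℕ∞) ↔ ∃ k ≤ n, 0 < k ∧ x k ∈ S ∧ ¬ sim (x 0) (x k) := by
  rw [← not_lt, coe_lt_hitT_iff]
  push_neg
  exact Iff.rfl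

lemma hitT_eq_coe_iff (x : ℕ → I) (n : ℕ) :
    hitT S sim x = ((n + 1 : ℕ) : ℕ∞) ↔
      hitT S sim x ≤ ((n + 1 : ℕ) : ℕ∞) ∧ (n : ℕ∞) < hitT S sim x := by
  constructor
  · intro h
    rw [h]
    exact ⟨le_rfl, by exact_mod_cast Nat.lt_succ_self n⟩
  · rintro ⟨h1, h2⟩
    refine le_antisymm h1 ?_
    have := Order.add_one_le_of_lt h2
    exact_mod_cast this

lemma hitT_lt_top_iff (x : ℕ → I) :
    hitT S sim x < ⊤ ↔ ∃ n : ℕ, hitT S sim x = ((n + 1 : ℕ) : ℕ∞) := by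
  constructor
  · intro h
    obtain ⟨m, hm⟩ := WithTop.ne_top_iff_exists.mp h.ne
    match m, hm with
    | 0, hm =>
      have h1 := one_le_hitT S sim x
      rw [← hm] at h1
      exact absurd h1 (fun h => absurd (WithTop.coe_le_coe.mp h) (by omega))
    | (k + 1), hm => exact ⟨k, hm.symm⟩
  · rintro ⟨n, hn⟩
    rw [hn]
    exact WithTop.coe_lt_top _




-- PART 2
variable [Fintype I] [MeasurableSingletonClass I]

lemma measurableSet_D {n : ℕ} {k : ℕ} (hk : k ≤ n) :
    MeasurableSet[coordSA I n] {x : ℕ → I | 0 < k ∧ x k ∈ S ∧ ¬ sim (x 0) (x k)} := by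
  rcases Nat.eq_zero_or_pos k with rfl | hkpos
  · have : {x : ℕ → I | 0 < 0 ∧ x 0 ∈ S ∧ ¬ sim (x 0) (x 0)} = ∅ := by
      ext x; simp
    rw [this]
    exact @MeasurableSet.empty _ (coordSA I n)
  · have : {x : ℕ → I | 0 < k ∧ x k ∈ S ∧ ¬ sim (x 0) (x k)}
        = (fun x : ℕ → I => (x 0, x k)) ⁻¹' {p : I × I | p.2 ∈ S ∧ ¬ sim p.1 p.2} := by
      ext x; simp [hkpos]
    rw [this]
    exact ((measurable_coord_coordSA (Nat.zero_le n)).prodMk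
      (measurable_coord_coordSA hk)) (measurableSet_of_finite _)

lemma measurableSet_hitT_le_coordSA (n : ℕ) :
    MeasurableSet[coordSA I n] {x : ℕ → I | hitT S sim x ≤ (n : ℕ∞)} := by
  have h : {x : ℕ → I | hitT S sim x ≤ (n : ℕ∞)}
      = ⋃ k ∈ Finset.range (n + 1),
          {x : ℕ → I | 0 < k ∧ x k ∈ S ∧ ¬ sim (x 0) (x k)} := by
    ext x
    simp only [Set.mem_setOf_eq, Set.mem_iUnion, Finset.mem_range, Nat.lt_succ_iff, exists_prop]
    exact hitT_le_coe_iff S sim x n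
  rw [h]
  exact MeasurableSet.biUnion (Finset.range (n + 1)).countable_toSet
    (fun k hk => measurableSet_D S sim (Nat.lt_succ_iff.mp (Finset.mem_range.mp hk)))

lemma measurableSet_hitT_le (n : ℕ) :
    MeasurableSet {x : ℕ → I | hitT S sim x ≤ (n : ℕ∞)} :=
  coordSA_le n _ (measurableSet_hitT_le_coordSA S sim n)

lemma measurableSet_lt_hitT (n : ℕ) :
    MeasurableSet {x : ℕ → I | (n : ℕ∞) < hitT S sim x} := by
  have : {x : ℕ → I | (n : ℕ∞) < hitT S sim x} = {x : ℕ → I | hitT S sim x ≤ (n : ℕ∞)}ᶜ := by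
    ext x; simp [not_le]
  rw [this]
  exact (measurableSet_hitT_le S sim n).compl

lemma measurableSet_hitT_eq (n : ℕ) :
    MeasurableSet {x : ℕ → I | hitT S sim x = ((n + 1 : ℕ) : ℕ∞)} := by
  have : {x : ℕ → I | hitT S sim x = ((n + 1 : ℕ) : ℕ∞)}
      = {x : ℕ → I | hitT S sim x ≤ ((n + 1 : ℕ) : ℕ∞)} ∩ {x : ℕ → I | (n : ℕ∞) < hitT S sim x} := by
    ext x
    exact hitT_eq_coe_iff S sim x n
  rw [this]
  exact (measurableSet_hitT_le S sim (n + 1)).inter (measurableSet_lt_hitT S sim n)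

lemma measurableSet_hitT_lt_top :
    MeasurableSet {x : ℕ → I | hitT S sim x < ⊤} := by
  have : {x : ℕ → I | hitT S sim x < ⊤}
      = ⋃ n : ℕ, {x : ℕ → I | hitT S sim x = ((n + 1 : ℕ) : ℕ∞)} := by
    ext x
    simp only [Set.mem_setOf_eq, Set.mem_iUnion]
    exact hitT_lt_top_iff S sim x
  rw [this]
  exact MeasurableSet.iUnion (fun n => measurableSet_hitT_eq S sim n)

lemma toNat_of_eq {x : ℕ → I} {n : ℕ} (h : hitT S sim x = ((n + 1 : ℕ) : ℕ∞)) :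
    (hitT S sim x).toNat = n + 1 := by
  rw [h]; exact ENat.toNat_coe _

lemma union_TltTop_shift (B : Set (ℕ → I)) :
    {x : ℕ → I | hitT S sim x < ⊤} ∩ {x : ℕ → I | shiftI (hitT S sim x).toNat x ∈ B}
      = ⋃ n : ℕ, ({x : ℕ → I | hitT S sim x = ((n + 1 : ℕ) : ℕ∞)} ∩ shiftI (n + 1) ⁻¹' B) := by
  ext x
  constructor
  · rintro ⟨h1, h2⟩
    obtain ⟨n, hn⟩ := (hitT_lt_top_iff S sim x).mp h1
    refine Set.mem_iUnion.mpr ⟨n, hn, ?_⟩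
    have ht := toNat_of_eq S sim hn
    simp only [Set.mem_setOf_eq] at h2
    rw [ht] at h2
    exact h2
  · intro hx
    obtain ⟨n, hn, hB⟩ := Set.mem_iUnion.mp hx
    have ht := toNat_of_eq S sim hn
    refine ⟨(hitT_lt_top_iff S sim x).mpr ⟨n, hn⟩, ?_⟩
    show shiftI (hitT S sim x).toNat x ∈ B
    rw [ht]
    exact hB

lemma union_TltTop_eval (i : I) :
    {x : ℕ → I | hitT S sim x < ⊤ ∧ x (hitT S sim x).toNat = i}
      = ⋃ n : ℕ, ({x : ℕ → I | hitT S sim x = ((n + 1 : ℕ) : ℕ∞)} ∩ {x : ℕ → I | x (n + 1) = i}) := by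
  ext x
  constructor
  · rintro ⟨h1, h2⟩
    obtain ⟨n, hn⟩ := (hitT_lt_top_iff S sim x).mp h1
    refine Set.mem_iUnion.mpr ⟨n, hn, ?_⟩
    have ht := toNat_of_eq S sim hn
    rw [ht] at h2
    exact h2
  · intro hx
    obtain ⟨n, hn, hB⟩ := Set.mem_iUnion.mp hx
    have ht := toNat_of_eq S sim hn
    refine ⟨(hitT_lt_top_iff S sim x).mpr ⟨n, hn⟩, ?_⟩
    show x (hitT S sim x).toNat = i
    rw [ht]
    exact hB

lemma pairwise_T (f : ℕ → Set (ℕ → I))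
    (hf : ∀ n, f n ⊆ {x : ℕ → I | hitT S sim x = ((n + 1 : ℕ) : ℕ∞)}) :
    Pairwise (Function.onFun Disjoint f) := by
  intro m n hmn
  simp only [Function.onFun]
  rw [Set.disjoint_left]
  intro x hxm hxn
  have h1 := hf m hxm
  have h2 := hf n hxn
  have h3 : ((m + 1 : ℕ) : ℕ∞) = ((n + 1 : ℕ) : ℕ∞) := h1.symm.trans h2
  have h4 : m + 1 = n + 1 := by exact_mod_cast h3
  exact hmn (by omega)


-- PART 3
lemma hitET_eq_tsum (μ : Measure (ℕ → I)) :
    hitET S sim μ = ∑' n : ℕ, μ {x : ℕ → I | (n : ℕ∞) < hitT S sim x} := by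
  have hpt : ∀ x : ℕ → I, ((hitT S sim x : ℕ∞) : ℝ≥0∞)
      = ∑' n : ℕ, Set.indicator {x : ℕ → I | (n : ℕ∞) < hitT S sim x} (fun _ => (1 : ℝ≥0∞)) x := by
    intro x
    have hind : ∀ n : ℕ, Set.indicator {x : ℕ → I | (n : ℕ∞) < hitT S sim x} (fun _ => (1 : ℝ≥0∞)) x
        = if (n : ℕ∞) < hitT S sim x then 1 else 0 := by
      intro n
      by_cases h : (n : ℕ∞) < hitT S sim x <;> simp [Set.indicator, h]
    simp_rw [hind]
    induction hitT S sim x using ENat.recTopCoe with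
    | top =>
      have h1 : ∀ n : ℕ, (if (n : ℕ∞) < (⊤ : ℕ∞) then (1 : ℝ≥0∞) else 0) = 1 := by
        intro n; simp
      simp_rw [h1]
      rw [ENat.toENNReal_top]
      exact (ENNReal.tsum_const_eq_top_of_ne_zero one_ne_zero).symm
    | coe k =>
      rw [ENat.toENNReal_coe]
      have h2 : ∀ n : ℕ, (if (n : ℕ∞) < (k : ℕ∞) then (1 : ℝ≥0∞) else 0) = if n < k then 1 else 0 := by
        intro n
        congr 1
        simp [Nat.cast_lt]
      simp_rw [h2]
      rw [tsum_eq_sum (s := Finset.range k) (fun n hn => if_neg (Finset.mem_range.not.mp hn))]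
      rw [Finset.sum_congr rfl (fun n hn => if_pos (Finset.mem_range.mp hn)), Finset.sum_const,
        Finset.card_range, nsmul_eq_mul, mul_one]
  rw [hitET, lintegral_congr hpt,
    lintegral_tsum (fun n => (measurable_const.indicator (measurableSet_lt_hitT S sim n)).aemeasurable)]
  refine tsum_congr fun n => ?_
  rw [lintegral_indicator_const (measurableSet_lt_hitT S sim n), one_mul]

lemma regen_key (Ps : I → Measure (ℕ → I)) {s : I} (hs : s ∈ S)
    (hprob : ∀ t ∈ S, IsProbabilityMeasure (Ps t))
    (hreg : Regen S (hitT S sim) Ps (Ps s))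
    {B : Set (ℕ → I)} (hB : MeasurableSet B) :
    ∑' n : ℕ, Ps s ({x : ℕ → I | hitT S sim x = ((n + 1 : ℕ) : ℕ∞)} ∩ shiftI (n + 1) ⁻¹' B)
      = ∑ s' ∈ S, qmat S sim Ps s s' * Ps s' B := by
  haveI := hprob s hs
  set U : Set (ℕ → I) :=
    ⋃ n : ℕ, ({x : ℕ → I | hitT S sim x = ((n + 1 : ℕ) : ℕ∞)} ∩ shiftI (n + 1) ⁻¹' B) with hU
  have hUn : ∀ n : ℕ,
      MeasurableSet ({x : ℕ → I | hitT S sim x = ((n + 1 : ℕ) : ℕ∞)} ∩ shiftI (n + 1) ⁻¹' B) :=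
    fun n => (measurableSet_hitT_eq S sim n).inter ((measurable_shiftI (n + 1)) hB)
  have hUmeas : MeasurableSet U := MeasurableSet.iUnion hUn
  have hUsub : U ⊆ {x : ℕ → I | hitT S sim x < ⊤} := by
    refine Set.iUnion_subset fun n x hx => ?_
    show hitT S sim x < ⊤
    rw [hx.1]
    exact WithTop.coe_lt_top _
  set V : I → Set (ℕ → I) := fun i =>
    ⋃ n : ℕ, ({x : ℕ → I | hitT S sim x = ((n + 1 : ℕ) : ℕ∞)} ∩ {x : ℕ → I | x (n + 1) = i}) with hV
  have hVn : ∀ (i : I) (n : ℕ),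
      MeasurableSet ({x : ℕ → I | hitT S sim x = ((n + 1 : ℕ) : ℕ∞)} ∩ {x : ℕ → I | x (n + 1) = i}) := by
    intro i n
    refine (measurableSet_hitT_eq S sim n).inter ?_
    have hm : Measurable (fun x : ℕ → I => x (n + 1)) := measurable_pi_apply (n + 1)
    exact hm (measurableSet_singleton i)
  have hVmeas : ∀ i, MeasurableSet (V i) := fun i => MeasurableSet.iUnion (hVn i)
  have hVsub : ∀ i, V i ⊆ {x : ℕ → I | hitT S sim x < ⊤} := by
    intro i
    refine Set.iUnion_subset fun n x hx => ?_
    show hitT S sim x < ⊤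
    rw [hx.1]
    exact WithTop.coe_lt_top _
  set h : (ℕ → I) → ℝ := B.indicator 1 with hdef
  have hmeas_h : Measurable h := measurable_one.indicator hB
  have hbnd : ∃ M, ∀ y, |h y| ≤ M := by
    refine ⟨1, fun y => ?_⟩
    rw [hdef]
    by_cases hy : y ∈ B
    · rw [Set.indicator_of_mem hy]; simp
    · rw [Set.indicator_of_notMem hy]; simp
  have hUniv : Set.univ ∈ stopSets (I := I) (hitT S sim) := by
    refine ⟨MeasurableSet.univ, fun n => ?_⟩
    rw [Set.univ_inter]
    exact measurableSet_hitT_le_coordSA S sim n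
  have hintid := hreg.2 h hmeas_h hbnd Set.univ hUniv
  rw [Set.univ_inter] at hintid
  have hTfinmeas : MeasurableSet {x : ℕ → I | hitT S sim x < ⊤} := measurableSet_hitT_lt_top S sim
  -- LHS
  have hLHS : (∫ x in {x : ℕ → I | hitT S sim x < ⊤}, h (shiftI (hitT S sim x).toNat x) ∂Ps s)
      = (Ps s U).toReal := by
    have heq : Set.EqOn (fun x : ℕ → I => h (shiftI (hitT S sim x).toNat x)) (U.indicator 1)
        {x : ℕ → I | hitT S sim x < ⊤} := by
      intro x hx
      have hmem : x ∈ U ↔ shiftI (hitT S sim x).toNat x ∈ B := by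
        constructor
        · intro hxU
          have h2 : x ∈ {x : ℕ → I | hitT S sim x < ⊤} ∩
              {x : ℕ → I | shiftI (hitT S sim x).toNat x ∈ B} := by
            rw [union_TltTop_shift S sim B]; exact hxU
          exact h2.2
        · intro hxB
          have h2 : x ∈ {x : ℕ → I | hitT S sim x < ⊤} ∩
              {x : ℕ → I | shiftI (hitT S sim x).toNat x ∈ B} := ⟨hx, hxB⟩
          rw [union_TltTop_shift S sim B] at h2
          exact h2
      show h (shiftI (hitT S sim x).toNat x) = U.indicator 1 x
      rw [hdef]
      by_cases hc : shiftI (hitT S sim x).toNat x ∈ B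
      · rw [Set.indicator_of_mem hc, Set.indicator_of_mem (hmem.mpr hc)]; rfl
      · rw [Set.indicator_of_notMem hc, Set.indicator_of_notMem (fun hxU => hc (hmem.mp hxU))]
    rw [setIntegral_congr_fun hTfinmeas heq, integral_indicator_one hUmeas,
      measureReal_def, Measure.restrict_apply hUmeas, Set.inter_eq_self_of_subset_left hUsub]
  -- RHS
  have hRHS : (∫ x in {x : ℕ → I | hitT S sim x < ⊤},
        (∫ y, h y ∂ Ps (x (hitT S sim x).toNat)) ∂Ps s)
      = ∑ i ∈ Finset.univ, (Ps s (V i)).toReal • (∫ y, h y ∂ Ps i) := by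
    have heq : Set.EqOn (fun x : ℕ → I => ∫ y, h y ∂ Ps (x (hitT S sim x).toNat))
        (fun x => ∑ i ∈ Finset.univ, (V i).indicator (fun _ => ∫ y, h y ∂ Ps i) x)
        {x : ℕ → I | hitT S sim x < ⊤} := by
      intro x hx
      obtain ⟨n, hn⟩ := (hitT_lt_top_iff S sim x).mp hx
      have ht := toNat_of_eq S sim hn
      have hxmem : x ∈ V (x (n + 1)) := Set.mem_iUnion.mpr ⟨n, hn, rfl⟩
      show (∫ y, h y ∂ Ps (x (hitT S sim x).toNat))
          = ∑ i ∈ Finset.univ, (V i).indicator (fun _ => ∫ y, h y ∂ Ps i) x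
      rw [Finset.sum_eq_single_of_mem (x (n + 1)) (Finset.mem_univ _) ?other]
      · rw [Set.indicator_of_mem hxmem, ht]
      case other =>
        intro b _ hb
        refine Set.indicator_of_notMem ?_ _
        intro hbV
        obtain ⟨m, hm, hbm⟩ := Set.mem_iUnion.mp hbV
        have hmn : m = n := by
          have h3 : ((m + 1 : ℕ) : ℕ∞) = ((n + 1 : ℕ) : ℕ∞) := hm.symm.trans hn
          have h4 : m + 1 = n + 1 := by exact_mod_cast h3
          omega
        apply hb
        rw [← hbm]
        show x (m+1) = x (n+1)
        rw [hmn]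
    rw [setIntegral_congr_fun hTfinmeas heq,
      integral_finset_sum _ (fun i _ => (integrable_const _).indicator (hVmeas i))]
    refine Finset.sum_congr rfl fun i _ => ?_
    rw [integral_indicator_const _ (hVmeas i), measureReal_def, Measure.restrict_apply (hVmeas i),
      Set.inter_eq_self_of_subset_left (hVsub i)]
  -- identify V i with qmat sets, and null for i ∉ S
  have hVq : ∀ i : I, Ps s (V i)
      = Ps s {x : ℕ → I | hitT S sim x < ⊤ ∧ x (hitT S sim x).toNat = i} := by
    intro i
    rw [union_TltTop_eval S sim i]
  have hnull : ∀ i : I, i ∉ S → Ps s (V i) = 0 := by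
    intro i hi
    rw [hVq]
    refine measure_mono_null ?_ hreg.1
    rintro x ⟨h1, h2⟩
    refine ⟨h1, ?_⟩
    show x (hitT S sim x).toNat ∉ (S : Set I)
    rw [h2]
    simpa using hi
  have hc_def : ∀ i : I, i ∈ S → (∫ y, h y ∂ Ps i) = (Ps i B).toReal := by
    intro i _
    rw [hdef]
    exact integral_indicator_one hB
  have hsum : ∑ i ∈ Finset.univ, (Ps s (V i)).toReal • (∫ y, h y ∂ Ps i)
      = ∑ i ∈ S, (qmat S sim Ps s i).toReal * (Ps i B).toReal := by
    rw [← Finset.sum_subset (Finset.subset_univ S) ?vanish]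
    · refine Finset.sum_congr rfl fun i hi => ?_
      rw [hc_def i hi, hVq i, smul_eq_mul]
      rfl
    case vanish =>
      intro i _ hi
      rw [hnull i hi]
      simp
  have hreal : (Ps s U).toReal = ∑ i ∈ S, (qmat S sim Ps s i).toReal * (Ps i B).toReal := by
    rw [← hLHS, hintid, hRHS, hsum]
  have hq_ne : ∀ i ∈ S, qmat S sim Ps s i * Ps i B ≠ ⊤ := by
    intro i hi
    haveI := hprob i hi
    exact ENNReal.mul_ne_top (measure_ne_top _ _) (measure_ne_top _ _)
  have hfin : Ps s U = ∑ i ∈ S, qmat S sim Ps s i * Ps i B := by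
    rw [← ENNReal.toReal_eq_toReal_iff' (measure_ne_top _ _) (ENNReal.sum_ne_top.mpr hq_ne), hreal,
      ENNReal.toReal_sum hq_ne]
    exact Finset.sum_congr rfl fun i hi => (ENNReal.toReal_mul).symm
  rw [← measure_iUnion (pairwise_T S sim _ (fun n => Set.inter_subset_left)) hUn]
  exact hfin


end Stmt6Aux

open Stmt6Aux

/-- If each `P*_s` starts at `s`, reaches a different class in an a.s. finite time with finite
mean, and regenerates at `T`, and if `π > 0` is normalized by `∑ π_s E*_s(T) = 1`, then the
probability measure `ℙ*` is shift-stationary iff `π` is invariant for the matrix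
`Q = (P*_s(X_T = s'))`. -/
theorem stmt_6 [Fintype I] [MeasurableSingletonClass I]
    (S : Finset I) (hS : S.Nonempty) (hSc : ∃ i : I, i ∉ S)
    (sim : I → I → Prop) (hsim : Equivalence sim)
    (Pstar : I → Measure (ℕ → I)) (hprob : ∀ s ∈ S, IsProbabilityMeasure (Pstar s))
    (hstart : ∀ s ∈ S, Pstar s {x | x 0 = s} = 1)
    (hTfin : ∀ s ∈ S, Pstar s {x | hitT S sim x < ⊤} = 1)
    (hETfin : ∀ s ∈ S, hitET S sim (Pstar s) < ⊤)
    (hregen : ∀ s ∈ S, Regen S (hitT S sim) Pstar (Pstar s))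
    (π : I → ℝ≥0) (hπ : ∀ s ∈ S, 0 < π s)
    (hnorm : ∑ s ∈ S, (π s : ℝ≥0∞) * hitET S sim (Pstar s) = 1) :
    (lawP S sim π Pstar).map (shiftI 1) = lawP S sim π Pstar ↔
      ∀ s ∈ S, (π s : ℝ≥0∞) = ∑ s' ∈ S, (π s' : ℝ≥0∞) * qmat S sim Pstar s' s := by
  classical
  have hmGt : ∀ n : ℕ, MeasurableSet {x : ℕ → I | (n : ℕ∞) < hitT S sim x} :=
    measurableSet_lt_hitT S sim
  -- evaluation of lawP on shift preimages
  have heval : ∀ (q : ℕ) (B : Set (ℕ → I)), MeasurableSet B →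
      lawP S sim π Pstar (shiftI q ⁻¹' B)
        = ∑ s ∈ S, (π s : ℝ≥0∞) *
            ∑' n : ℕ, Pstar s ({x : ℕ → I | (n : ℕ∞) < hitT S sim x} ∩ shiftI (n + q) ⁻¹' B) := by
    intro q B hB
    have hBq : MeasurableSet (shiftI q ⁻¹' B) := (measurable_shiftI q) hB
    rw [lawP, Measure.finset_sum_apply]
    refine Finset.sum_congr rfl fun s _ => ?_
    rw [Measure.smul_apply, Measure.sum_apply _ hBq, ENNReal.smul_def]
    congr 1
    refine tsum_congr fun n => ?_
    rw [Measure.map_apply (measurable_shiftI n) hBq,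
      Measure.restrict_apply ((measurable_shiftI n) hBq),
      ← Set.preimage_comp, shiftI_comp, Set.inter_comm]
  -- the tail quantities
  set Cc : I → Set (ℕ → I) → ℝ≥0∞ := fun s B =>
    ∑' n : ℕ, Pstar s ({x : ℕ → I | ((n + 1 : ℕ) : ℕ∞) < hitT S sim x} ∩ shiftI (n + 1) ⁻¹' B)
    with hCc
  have hCfin : ∀ s ∈ S, ∀ B : Set (ℕ → I), Cc s B ≠ ⊤ := by
    intro s hs B
    have hle : Cc s B ≤ hitET S sim (Pstar s) := by
      rw [hCc, hitET_eq_tsum S sim]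
      refine ENNReal.tsum_le_tsum fun n => measure_mono ?_
      refine Set.inter_subset_left.trans ?_
      intro x hx
      show (n : ℕ∞) < hitT S sim x
      refine lt_trans ?_ hx
      exact_mod_cast Nat.lt_succ_self n
    exact (lt_of_le_of_lt hle (hETfin s hs)).ne
  set K : Set (ℕ → I) → ℝ≥0∞ := fun B => ∑ s ∈ S, (π s : ℝ≥0∞) * Cc s B with hK
  have hKfin : ∀ B : Set (ℕ → I), K B ≠ ⊤ := fun B =>
    ENNReal.sum_ne_top.mpr fun s hs => ENNReal.mul_ne_top ENNReal.coe_ne_top (hCfin s hs B)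
  -- splitting {n < T} = {T = n+1} ∪ {n+1 < T}
  have hsplit : ∀ (s : I) (B : Set (ℕ → I)), MeasurableSet B → ∀ n : ℕ,
      Pstar s ({x : ℕ → I | (n : ℕ∞) < hitT S sim x} ∩ shiftI (n + 1) ⁻¹' B)
        = Pstar s ({x : ℕ → I | hitT S sim x = ((n + 1 : ℕ) : ℕ∞)} ∩ shiftI (n + 1) ⁻¹' B)
          + Pstar s ({x : ℕ → I | ((n + 1 : ℕ) : ℕ∞) < hitT S sim x} ∩ shiftI (n + 1) ⁻¹' B) := by
    intro s B hB n
    have hset : {x : ℕ → I | (n : ℕ∞) < hitT S sim x} ∩ shiftI (n + 1) ⁻¹' B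
        = ({x : ℕ → I | hitT S sim x = ((n + 1 : ℕ) : ℕ∞)} ∩ shiftI (n + 1) ⁻¹' B)
          ∪ ({x : ℕ → I | ((n + 1 : ℕ) : ℕ∞) < hitT S sim x} ∩ shiftI (n + 1) ⁻¹' B) := by
      rw [← Set.union_inter_distrib_right]
      congr 1
      ext x
      simp only [Set.mem_setOf_eq, Set.mem_union]
      constructor
      · intro hlt
        rcases eq_or_lt_of_le (Order.add_one_le_of_lt hlt) with heq | hlt2
        · left; rw [← heq]; push_cast; ring
        · right; push_cast; exact hlt2
      · rintro (heq | hlt2)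
        · rw [heq]; exact_mod_cast Nat.lt_succ_self n
        · refine lt_trans ?_ hlt2; exact_mod_cast Nat.lt_succ_self n
    rw [hset, measure_union ?disj ((hmGt (n + 1)).inter ((measurable_shiftI (n + 1)) hB))]
    case disj =>
      rw [Set.disjoint_left]
      rintro x ⟨h1, _⟩ ⟨h2, _⟩
      simp only [Set.mem_setOf_eq] at h1 h2
      rw [h1] at h2
      exact lt_irrefl _ h2
  -- the shifted law
  have hmap : ∀ B : Set (ℕ → I), MeasurableSet B →
      (lawP S sim π Pstar).map (shiftI 1) B
        = (∑ s ∈ S, (π s : ℝ≥0∞) * ∑' n : ℕ,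
            Pstar s ({x : ℕ → I | hitT S sim x = ((n + 1 : ℕ) : ℕ∞)} ∩ shiftI (n + 1) ⁻¹' B)) + K B := by
    intro B hB
    rw [Measure.map_apply (measurable_shiftI 1) hB, heval 1 B hB]
    rw [Finset.sum_congr rfl (fun s _ => ?_), Finset.sum_add_distrib]
    rw [show (∑' n : ℕ, Pstar s ({x : ℕ → I | (n : ℕ∞) < hitT S sim x} ∩ shiftI (n + 1) ⁻¹' B))
        = (∑' n : ℕ, Pstar s ({x : ℕ → I | hitT S sim x = ((n + 1 : ℕ) : ℕ∞)} ∩ shiftI (n + 1) ⁻¹' B))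
          + Cc s B from by rw [← ENNReal.tsum_add]; exact tsum_congr fun n => hsplit s B hB n,
      mul_add]
  -- the law itself
  have hid : ∀ B : Set (ℕ → I), MeasurableSet B →
      lawP S sim π Pstar B = (∑ s ∈ S, (π s : ℝ≥0∞) * Pstar s B) + K B := by
    intro B hB
    have h0 := heval 0 B hB
    simp only [Nat.add_zero] at h0
    rw [show shiftI (I := I) 0 ⁻¹' B = B from by rw [shiftI_zero]; rfl] at h0
    rw [h0]
    rw [Finset.sum_congr rfl (fun s _ => ?_), Finset.sum_add_distrib]
    have hsum : (∑' n : ℕ, Pstar s ({x : ℕ → I | (n : ℕ∞) < hitT S sim x} ∩ shiftI n ⁻¹' B))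
        = Pstar s B + Cc s B := by
      rw [tsum_eq_zero_add' ENNReal.summable]
      congr 1
      · show Pstar s ({x : ℕ → I | ((0 : ℕ) : ℕ∞) < hitT S sim x} ∩ shiftI 0 ⁻¹' B) = Pstar s B
        have h1 : {x : ℕ → I | ((0 : ℕ) : ℕ∞) < hitT S sim x} = Set.univ := by
          ext x
          simp only [Set.mem_setOf_eq, Set.mem_univ, iff_true]
          refine lt_of_lt_of_le ?_ (one_le_hitT S sim x)
          simp
        rw [h1, Set.univ_inter, show shiftI (I := I) 0 ⁻¹' B = B from by rw [shiftI_zero]; rfl]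
    rw [hsum, mul_add]
  -- regeneration rewriting and sum swap
  have hAB : ∀ B : Set (ℕ → I), MeasurableSet B →
      (∑ s ∈ S, (π s : ℝ≥0∞) * ∑' n : ℕ,
          Pstar s ({x : ℕ → I | hitT S sim x = ((n + 1 : ℕ) : ℕ∞)} ∩ shiftI (n + 1) ⁻¹' B))
        = ∑ s' ∈ S, (∑ s ∈ S, (π s : ℝ≥0∞) * qmat S sim Pstar s s') * Pstar s' B := by
    intro B hB
    rw [Finset.sum_congr rfl (fun s hs => by
      rw [regen_key S sim Pstar hs hprob (hregen s hs) hB, Finset.mul_sum])]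
    rw [Finset.sum_comm]
    refine Finset.sum_congr rfl fun s' _ => ?_
    rw [Finset.sum_mul]
    exact Finset.sum_congr rfl fun s _ => (mul_assoc _ _ _).symm
  -- final equivalence
  constructor
  · intro hstat s₀ hs₀
    set B₀ : Set (ℕ → I) := {x | x 0 = s₀} with hB₀def
    have hB₀ : MeasurableSet B₀ := by
      have hm : Measurable (fun x : ℕ → I => x 0) := measurable_pi_apply 0
      exact hm (measurableSet_singleton s₀)
    have hEqm : (lawP S sim π Pstar).map (shiftI 1) B₀ = lawP S sim π Pstar B₀ := by rw [hstat]
    rw [hmap B₀ hB₀, hid B₀ hB₀, hAB B₀ hB₀] at hEqm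
    have hEq := (ENNReal.add_left_inj (hKfin B₀)).mp hEqm
    have hP01 : ∀ s' ∈ S, Pstar s' B₀ = if s' = s₀ then 1 else 0 := by
      intro s' hs'
      haveI := hprob s' hs'
      by_cases he : s' = s₀
      · rw [if_pos he, he]
        exact hstart s₀ hs₀
      · rw [if_neg he]
        have hm : MeasurableSet {x : ℕ → I | x 0 = s'} := by
          have hm0 : Measurable (fun x : ℕ → I => x 0) := measurable_pi_apply 0
          exact hm0 (measurableSet_singleton s')
        have hcompl : Pstar s' {x : ℕ → I | x 0 = s'}ᶜ = 0 := by
          rw [measure_compl hm (measure_ne_top _ _), measure_univ, hstart s' hs', tsub_self]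
        refine measure_mono_null ?_ hcompl
        intro x hx hx'
        exact he ((hx' : x 0 = s').symm.trans hx)
    have hL : ∑ s' ∈ S, (∑ s ∈ S, (π s : ℝ≥0∞) * qmat S sim Pstar s s') * Pstar s' B₀
        = ∑ s ∈ S, (π s : ℝ≥0∞) * qmat S sim Pstar s s₀ := by
      rw [Finset.sum_eq_single_of_mem s₀ hs₀
        (fun b hbS hb => by rw [hP01 b hbS, if_neg hb, mul_zero]),
        hP01 s₀ hs₀, if_pos rfl, mul_one]
    have hR : ∑ s ∈ S, (π s : ℝ≥0∞) * Pstar s B₀ = (π s₀ : ℝ≥0∞) := by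
      rw [Finset.sum_eq_single_of_mem s₀ hs₀
        (fun b hbS hb => by rw [hP01 b hbS, if_neg hb, mul_zero]),
        hP01 s₀ hs₀, if_pos rfl, mul_one]
    rw [hL, hR] at hEq
    exact hEq.symm
  · intro hinv
    refine Measure.ext fun B hB => ?_
    rw [hmap B hB, hid B hB, hAB B hB]
    congr 1
    refine Finset.sum_congr rfl fun s' hs' => ?_
    rw [← hinv s' hs']
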